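/- Let {e_n} and {f_n} be orthonormal bases of H, let φ be the interleaved Parseval frame φ_{2n−1} = (1/√2) e_n, φ_{2n} = (1/√2) f_n, and let m be the sequence m_{2n−1} = 1/(n+1), m_{2n} = 2 − 1/(n+1) for n ≥ 1. Then the spectrum of M_{m,φ,φ} is contained in [3/4, 5/4]; in particular M_{m,φ,φ} is boundedly invertible. -/

import Mathlib

open scoped InnerProductSpace

private lemma aux_re_17 (a z : ℂ) : (a * z * (starRingEnd ℂ) z).re = a.re * ‖z‖^2 := by
  rw [mul_assoc, Complex.mul_conj]
  simp [Complex.mul_re, ← Complex.ofReal_pow, Complex.normSq_eq_norm_sq]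

private lemma aux_parseval_17 {H : Type*} [NormedAddCommGroup H] [InnerProductSpace ℂ H]
    [CompleteSpace H] (e : HilbertBasis ℕ ℂ H) (g : H) :
    HasSum (fun k => ‖⟪e k, g⟫_ℂ‖^2) (‖g‖^2) := by
  have h := (e.hasSum_inner_mul_inner g g).mapL Complex.reCLM
  have h2 : ∀ k : ℕ, Complex.reCLM (⟪g, e k⟫_ℂ * ⟪e k, g⟫_ℂ) = ‖⟪e k, g⟫_ℂ‖^2 := by
    intro k
    show (⟪g, e k⟫_ℂ * ⟪e k, g⟫_ℂ).re = _
    rw [← inner_conj_symm]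
    have := aux_re_17 1 ⟪e k, g⟫_ℂ
    simpa [mul_comm] using this
  have h3 : Complex.reCLM ⟪g, g⟫_ℂ = ‖g‖^2 := by
    show (⟪g, g⟫_ℂ).re = _
    exact inner_self_eq_norm_sq (𝕜 := ℂ) g
  rw [h3] at h
  simpa only [h2] using h

private lemma aux_norm_half_17 {H : Type*} [NormedAddCommGroup H] [InnerProductSpace ℂ H]
    (v g : H) : ‖⟪((Real.sqrt 2)⁻¹ : ℂ) • v, g⟫_ℂ‖^2 = 2⁻¹ * ‖⟪v, g⟫_ℂ‖^2 := by
  rw [inner_smul_left, norm_mul, mul_pow,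
    RCLike.norm_conj, norm_inv, Complex.norm_real, Real.norm_eq_abs,
    abs_of_nonneg (Real.sqrt_nonneg 2), inv_pow, Real.sq_sqrt (by norm_num)]

private lemma aux_inv_bounds_17 (k : ℕ) : (0:ℝ) < ((k:ℝ)+2)⁻¹ ∧ ((k:ℝ)+2)⁻¹ ≤ 2⁻¹ := by
  have hk : (0:ℝ) < (k:ℝ) + 2 := by positivity
  constructor
  · positivity
  · rw [inv_le_inv₀ hk (by norm_num)]
    have : (0:ℝ) ≤ (k:ℝ) := Nat.cast_nonneg k
    linarith

private lemma aux_quad_17 {H : Type*} [NormedAddCommGroup H] [InnerProductSpace ℂ H]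
    [CompleteSpace H]
    (e f : HilbertBasis ℕ ℂ H)
    (φ : ℕ → H)
    (hφe : ∀ n : ℕ, φ (2 * n) = ((Real.sqrt 2)⁻¹ : ℂ) • e n)
    (hφf : ∀ n : ℕ, φ (2 * n + 1) = ((Real.sqrt 2)⁻¹ : ℂ) • f n)
    (m : ℕ → ℂ)
    (hm : ∀ n : ℕ, m (2 * n) = ((n : ℂ) + 2)⁻¹ ∧ m (2 * n + 1) = 2 - ((n : ℂ) + 2)⁻¹)
    (M : H →L[ℂ] H)
    (hM : ∀ g : H, HasSum (fun n => (m n * ⟪φ n, g⟫_ℂ) • φ n) (M g)) (g : H) :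
    3/4 * ‖g‖^2 ≤ (⟪g, M g⟫_ℂ).re ∧ (⟪g, M g⟫_ℂ).re ≤ 5/4 * ‖g‖^2 := by
  set s : ℕ → ℝ := fun n => (m n).re * ‖⟪φ n, g⟫_ℂ‖^2 with hs_def
  have hsum : HasSum s (⟪g, M g⟫_ℂ).re := by
    have h1 := ((innerSL ℂ g).hasSum (hM g)).mapL Complex.reCLM
    have h2 : ∀ n : ℕ, Complex.reCLM ((innerSL ℂ g) ((m n * ⟪φ n, g⟫_ℂ) • φ n)) = s n := by
      intro n
      have : (innerSL ℂ g) ((m n * ⟪φ n, g⟫_ℂ) • φ n) = (m n * ⟪φ n, g⟫_ℂ) * ⟪g, φ n⟫_ℂ := by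
        simp [inner_smul_right]
      rw [this]
      show ((m n * ⟪φ n, g⟫_ℂ) * ⟪g, φ n⟫_ℂ).re = _
      rw [← inner_conj_symm g (φ n)]
      exact aux_re_17 (m n) ⟪φ n, g⟫_ℂ
    simp only [h2] at h1
    simpa only [innerSL_apply_apply, Complex.reCLM_apply] using h1
  have hPe := aux_parseval_17 e g
  have hPf := aux_parseval_17 f g
  have hre_e : ∀ k : ℕ, (m (2*k)).re = ((k:ℝ)+2)⁻¹ := by
    intro k
    rw [(hm k).1]
    have : ((k:ℂ) + 2)⁻¹ = ((((k:ℝ)+2)⁻¹ : ℝ) : ℂ) := by push_cast; ring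
    rw [this, Complex.ofReal_re]
  have hre_f : ∀ k : ℕ, (m (2*k+1)).re = 2 - ((k:ℝ)+2)⁻¹ := by
    intro k
    rw [(hm k).2]
    have : (2 : ℂ) - ((k:ℂ) + 2)⁻¹ = (((2 - ((k:ℝ)+2)⁻¹ : ℝ)) : ℂ) := by push_cast; ring
    rw [this, Complex.ofReal_re]
  have hse : ∀ k : ℕ, s (2*k) = ((k:ℝ)+2)⁻¹ * (2⁻¹ * ‖⟪e k, g⟫_ℂ‖^2) := by
    intro k; rw [hs_def]; simp only []
    rw [hre_e k, hφe k, aux_norm_half_17]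
  have hso : ∀ k : ℕ, s (2*k+1) = (2 - ((k:ℝ)+2)⁻¹) * (2⁻¹ * ‖⟪f k, g⟫_ℂ‖^2) := by
    intro k; rw [hs_def]; simp only []
    rw [hre_f k, hφf k, aux_norm_half_17]
  have hse_nonneg : ∀ k : ℕ, 0 ≤ s (2*k) := by
    intro k; rw [hse k]
    have := (aux_inv_bounds_17 k).1
    positivity
  have hse_le : ∀ k : ℕ, s (2*k) ≤ 4⁻¹ * ‖⟪e k, g⟫_ℂ‖^2 := by
    intro k; rw [hse k]
    have h1 := (aux_inv_bounds_17 k).2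
    nlinarith [sq_nonneg ‖⟪e k, g⟫_ℂ‖]
  have hso_ge : ∀ k : ℕ, 3/4 * ‖⟪f k, g⟫_ℂ‖^2 ≤ s (2*k+1) := by
    intro k; rw [hso k]
    have h1 := (aux_inv_bounds_17 k).2
    nlinarith [sq_nonneg ‖⟪f k, g⟫_ℂ‖]
  have hso_le : ∀ k : ℕ, s (2*k+1) ≤ ‖⟪f k, g⟫_ℂ‖^2 := by
    intro k; rw [hso k]
    have h1 := (aux_inv_bounds_17 k).1
    nlinarith [sq_nonneg ‖⟪f k, g⟫_ℂ‖]
  have hso_nonneg : ∀ k : ℕ, 0 ≤ s (2*k+1) := by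
    intro k
    refine le_trans ?_ (hso_ge k)
    positivity
  have hA : Summable (fun k => s (2*k)) :=
    Summable.of_nonneg_of_le hse_nonneg hse_le (hPe.summable.mul_left 4⁻¹)
  have hB : Summable (fun k => s (2*k+1)) :=
    Summable.of_nonneg_of_le hso_nonneg hso_le hPf.summable
  have htot : HasSum s (∑' k, s (2*k) + ∑' k, s (2*k+1)) :=
    HasSum.even_add_odd hA.hasSum hB.hasSum
  have hRe : (⟪g, M g⟫_ℂ).re = ∑' k, s (2*k) + ∑' k, s (2*k+1) := hsum.unique htot
  have hA0 : 0 ≤ ∑' k, s (2*k) := tsum_nonneg hse_nonneg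
  have hA1 : ∑' k, s (2*k) ≤ 4⁻¹ * ‖g‖^2 :=
    hasSum_le hse_le hA.hasSum (hPe.mul_left 4⁻¹)
  have hB0 : 3/4 * ‖g‖^2 ≤ ∑' k, s (2*k+1) :=
    hasSum_le hso_ge (hPf.mul_left (3/4)) hB.hasSum
  have hB1 : ∑' k, s (2*k+1) ≤ ‖g‖^2 :=
    hasSum_le hso_le hB.hasSum hPf
  constructor
  · rw [hRe]; linarith
  · rw [hRe]; linarith

private lemma aux_sym_17 {H : Type*} [NormedAddCommGroup H] [InnerProductSpace ℂ H]
    [CompleteSpace H]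
    (φ : ℕ → H) (m : ℕ → ℂ)
    (hmr : ∀ n : ℕ, (starRingEnd ℂ) (m n) = m n)
    (M : H →L[ℂ] H)
    (hM : ∀ g : H, HasSum (fun n => (m n * ⟪φ n, g⟫_ℂ) • φ n) (M g)) :
    IsSelfAdjoint M := by
  rw [ContinuousLinearMap.isSelfAdjoint_iff_isSymmetric]
  intro x y
  have h1 : HasSum (fun n => m n * ⟪φ n, x⟫_ℂ * ⟪y, φ n⟫_ℂ) ⟪y, M x⟫_ℂ := by
    have := (innerSL ℂ y).hasSum (hM x)
    simpa [inner_smul_right, mul_comm, mul_assoc, mul_left_comm] using this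
  have h2 : HasSum (fun n => m n * ⟪φ n, y⟫_ℂ * ⟪x, φ n⟫_ℂ) ⟪x, M y⟫_ℂ := by
    have := (innerSL ℂ x).hasSum (hM y)
    simpa [inner_smul_right, mul_comm, mul_assoc, mul_left_comm] using this
  have h3 : HasSum (fun n => m n * ⟪φ n, y⟫_ℂ * ⟪x, φ n⟫_ℂ) (star ⟪y, M x⟫_ℂ) := by
    have h4 := h1.star
    have heq : ∀ n : ℕ, star (m n * ⟪φ n, x⟫_ℂ * ⟪y, φ n⟫_ℂ)
        = m n * ⟪φ n, y⟫_ℂ * ⟪x, φ n⟫_ℂ := by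
      intro n
      have : star (m n * ⟪φ n, x⟫_ℂ * ⟪y, φ n⟫_ℂ)
          = (starRingEnd ℂ) (m n) * (starRingEnd ℂ) ⟪φ n, x⟫_ℂ * (starRingEnd ℂ) ⟪y, φ n⟫_ℂ := by
        simp [star_mul, mul_comm, mul_assoc, mul_left_comm]
      rw [this, hmr n, inner_conj_symm, inner_conj_symm]
      ring
    simpa only [heq] using h4
  have hsym : ⟪(M : H →ₗ[ℂ] H) x, y⟫_ℂ = ⟪x, (M : H →ₗ[ℂ] H) y⟫_ℂ := by
    show ⟪M x, y⟫_ℂ = ⟪x, M y⟫_ℂ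
    rw [← inner_conj_symm (M x) y]
    exact h3.unique h2
  exact hsym

/-- for the interleaving `φ` of two orthonormal bases scaled by `1/√2` and
the symbol `m` with `m` on the `e`-block equal to `1/(n+1)` and on the `f`-block equal to
`2 − 1/(n+1)` (`n ≥ 1`), the spectrum of `M_{m,φ,φ}` is contained in `[3/4, 5/4]`; in
particular `M_{m,φ,φ}` is boundedly invertible. -/
theorem spectrum_multiplier_interleaved_invertible
    {H : Type*} [NormedAddCommGroup H] [InnerProductSpace ℂ H] [CompleteSpace H]
    (e f : HilbertBasis ℕ ℂ H)
    (φ : ℕ → H)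
    (hφe : ∀ n : ℕ, φ (2 * n) = ((Real.sqrt 2)⁻¹ : ℂ) • e n)
    (hφf : ∀ n : ℕ, φ (2 * n + 1) = ((Real.sqrt 2)⁻¹ : ℂ) • f n)
    (m : ℕ → ℂ)
    (hm : ∀ n : ℕ, m (2 * n) = ((n : ℂ) + 2)⁻¹ ∧ m (2 * n + 1) = 2 - ((n : ℂ) + 2)⁻¹)
    (M : H →L[ℂ] H)
    (hM : ∀ g : H, HasSum (fun n => (m n * ⟪φ n, g⟫_ℂ) • φ n) (M g)) :
    spectrum ℂ M ⊆ (fun r : ℝ => (r : ℂ)) '' Set.Icc (3 / 4) (5 / 4) ∧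
    IsUnit M := by
  have hmr : ∀ n : ℕ, (starRingEnd ℂ) (m n) = m n := by
    intro n
    rcases Nat.even_or_odd n with ⟨k, rfl⟩ | ⟨k, rfl⟩
    · rw [show k + k = 2*k from (two_mul k).symm, (hm k).1]
      simp [Complex.conj_ofNat]
    · rw [(hm k).2]
      simp [Complex.conj_ofNat]
  have hsa : IsSelfAdjoint M := aux_sym_17 φ m hmr M hM
  have hquad : ∀ g : H, 3/4 * ‖g‖^2 ≤ (⟪g, M g⟫_ℂ).re ∧ (⟪g, M g⟫_ℂ).re ≤ 5/4 * ‖g‖^2 :=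
    aux_quad_17 e f φ hφe hφf m hm M hM
  have halg : ∀ (r : ℝ) (x : H), (algebraMap ℝ (H →L[ℂ] H) r) x = (r : ℝ) • x := by
    intro r x
    rw [Algebra.algebraMap_eq_smul_one]
    rfl
  have hsa_alg : ∀ r : ℝ, IsSelfAdjoint (algebraMap ℝ (H →L[ℂ] H) r) := by
    intro r
    exact IsSelfAdjoint.algebraMap _ (star_trivial r)
  have hre : ∀ (T : H →L[ℂ] H) (x : H), T.reApplyInnerSelf x = (⟪x, T x⟫_ℂ).re := by
    intro T x
    rw [T.reApplyInnerSelf_apply]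
    exact inner_re_symm (𝕜 := ℂ) (T x) x
  have hre_sub : ∀ (r : ℝ) (x : H), (⟪x, M x - (r:ℝ) • x⟫_ℂ).re = (⟪x, M x⟫_ℂ).re - r * ‖x‖^2 := by
    intro r x
    rw [inner_sub_right]
    have h2 : ⟪x, r • x⟫_ℂ = (r : ℂ) * ⟪x, x⟫_ℂ := by
      rw [RCLike.real_smul_eq_coe_smul (K := ℂ), inner_smul_right]
      rfl
    have h1 : ((⟪x, x⟫_ℂ)).re = ‖x‖^2 := inner_self_eq_norm_sq (𝕜 := ℂ) x
    rw [Complex.sub_re, h2, Complex.re_ofReal_mul, h1]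
  have hpos1 : (M - algebraMap ℝ (H →L[ℂ] H) (3/4)).IsPositive := by
    constructor
    · exact (hsa.sub (hsa_alg _)).isSymmetric
    · intro x
      rw [hre]
      rw [ContinuousLinearMap.sub_apply, halg, hre_sub]
      have := (hquad x).1
      linarith
  have hpos2 : (algebraMap ℝ (H →L[ℂ] H) (5/4) - M).IsPositive := by
    constructor
    · exact ((hsa_alg _).sub hsa).isSymmetric
    · intro x
      rw [hre]
      have hx : (algebraMap ℝ (H →L[ℂ] H) (5/4) - M) x = (5/4 : ℝ) • x - M x := by
        rw [ContinuousLinearMap.sub_apply, halg]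
      rw [hx]
      have h2 : (⟪x, (5/4 : ℝ) • x - M x⟫_ℂ).re = -((⟪x, M x - (5/4 : ℝ) • x⟫_ℂ).re) := by
        rw [← Complex.neg_re, ← inner_neg_right, neg_sub]
      rw [h2, hre_sub]
      have := (hquad x).2
      linarith
  have h34 : algebraMap ℝ (H →L[ℂ] H) (3/4) ≤ M := by
    rw [← sub_nonneg]
    exact (ContinuousLinearMap.nonneg_iff_isPositive _).mpr hpos1
  have h54 : M ≤ algebraMap ℝ (H →L[ℂ] H) (5/4) := by
    rw [← sub_nonneg]
    exact (ContinuousLinearMap.nonneg_iff_isPositive _).mpr hpos2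
  have hs1 := (algebraMap_le_iff_le_spectrum (R := ℝ) (a := M) hsa).mp h34
  have hs2 := (le_algebraMap_iff_spectrum_le (R := ℝ) (a := M) hsa).mp h54
  have himg : (algebraMap ℝ ℂ) '' spectrum ℝ M = spectrum ℂ M :=
    hsa.spectrumRestricts.algebraMap_image
  constructor
  · intro z hz
    rw [← himg] at hz
    obtain ⟨r, hr, rfl⟩ := hz
    exact ⟨r, ⟨hs1 r hr, hs2 r hr⟩, (congrFun Complex.coe_algebraMap r).symm⟩
  · rw [← spectrum.zero_notMem_iff ℂ]
    intro h0
    rw [← himg] at h0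
    obtain ⟨r, hr, hr0⟩ := h0
    rw [Complex.coe_algebraMap] at hr0
    have hr' : r = 0 := by exact_mod_cast hr0
    have := hs1 r hr
    rw [hr'] at this
    norm_num at this
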